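/- arXiv:1607.01428 — 2 statements merged into one kernel-verified Lean document; each statement's English description precedes it below -/
import Mathlib

section
/- For m ∈ ℤ_p, the binomial series (1+X)^m = 1 + Σ_{i≥1} (m(m-1)···(m-i+1)/i!)·X^i has all coefficients in ℤ_p, and for any p-power root of unity ζ in ℂ_p, evaluating the series at X = ζ - 1 yields ζ^c where c is any nonnegative integer congruent to m modulo the order of ζ. -/
open scoped Classical

/-- The `i`-th coefficient `m(m-1)⋯(m-i+1)/i!` of the binomial series `(1+X)^m`
for a `p`-adic integer exponent `m`. -/
noncomputable def binomCoeff {p : ℕ} [Fact p.Prime] (m : ℤ_[p]) (i : ℕ) : ℚ_[p] :=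
  (∏ j ∈ Finset.range i, ((m : ℚ_[p]) - (j : ℚ_[p]))) / (i.factorial : ℚ_[p])


variable {p : ℕ} [Fact p.Prime]

lemma prod_range_natCast (n i : ℕ) :
    ∏ j ∈ Finset.range i, ((n : ℚ_[p]) - (j : ℚ_[p])) = (n.descFactorial i : ℚ_[p]) := by
  induction i with
  | zero => simp
  | succ i ih =>
    rw [Finset.prod_range_succ, ih, Nat.descFactorial_succ]
    rcases lt_or_ge i n with h | h
    · rw [Nat.cast_mul, Nat.cast_sub h.le]; ring
    · rcases eq_or_lt_of_le h with rfl | h'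
      · simp
      · rw [Nat.descFactorial_eq_zero_iff_lt.mpr h']; simp

lemma binomCoeff_natCast (n i : ℕ) :
    binomCoeff (n : ℤ_[p]) i = (n.choose i : ℚ_[p]) := by
  unfold binomCoeff
  rw [show ((n : ℤ_[p]) : ℚ_[p]) = (n : ℚ_[p]) by push_cast; ring,
    prod_range_natCast, Nat.descFactorial_eq_factorial_mul_choose, Nat.cast_mul,
    mul_comm, mul_div_assoc, div_self, mul_one]
  exact_mod_cast i.factorial_ne_zero

lemma continuous_binomCoeff (i : ℕ) : Continuous fun m : ℤ_[p] => binomCoeff m i := by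
  unfold binomCoeff
  apply Continuous.div_const
  apply continuous_finset_prod
  intro j _
  exact continuous_subtype_val.sub continuous_const

lemma norm_binomCoeff_le (m : ℤ_[p]) (i : ℕ) : ‖binomCoeff m i‖ ≤ 1 := by
  have hclosed : IsClosed {m : ℤ_[p] | ‖binomCoeff m i‖ ≤ 1} :=
    isClosed_le ((continuous_binomCoeff i).norm) continuous_const
  have hsub : Set.range (Nat.cast : ℕ → ℤ_[p]) ⊆ {m : ℤ_[p] | ‖binomCoeff m i‖ ≤ 1} := by
    rintro _ ⟨n, rfl⟩
    simp only [Set.mem_setOf_eq, binomCoeff_natCast]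
    exact_mod_cast Padic.norm_int_le_one ((n.choose i : ℤ))
  have := PadicInt.denseRange_natCast (p := p)
  have : Set.univ ⊆ {m : ℤ_[p] | ‖binomCoeff m i‖ ≤ 1} := by
    rw [← this.closure_range]
    exact closure_minimal hsub hclosed
  exact this (Set.mem_univ m)

section Aux
variable {p : ℕ} [Fact p.Prime]
variable {K : Type*} [NormedField K] [IsUltrametricDist K]
  [Algebra ℚ_[p] K] (hiso : ∀ a : ℚ_[p], ‖algebraMap ℚ_[p] K a‖ = ‖a‖)
include hiso
set_option linter.unusedSectionVars false

lemma norm_natCast_le_one (n : ℕ) : ‖(n : K)‖ ≤ 1 := by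
  rw [← map_natCast (algebraMap ℚ_[p] K), hiso]
  exact_mod_cast Padic.norm_int_le_one ((n : ℤ))

lemma norm_p_cast : ‖(p : K)‖ = (p : ℝ)⁻¹ := by
  rw [← map_natCast (algebraMap ℚ_[p] K), hiso, Padic.norm_p]

lemma norm_sub_one_lt (k : ℕ) (ζ : K) (hk : ζ ^ p ^ k = 1) : ‖ζ - 1‖ < 1 := by
  induction k generalizing ζ with
  | zero =>
    simp only [pow_zero, pow_one] at hk
    simp [hk]
  | succ k ih =>
    have hζp : (ζ ^ p) ^ p ^ k = 1 := by
      rw [← pow_mul, ← pow_succ']; exact hk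
    have ihp := ih (ζ ^ p) hζp
    by_contra hcon
    push_neg at hcon
    set t := ζ - 1 with ht
    have hp2 : 2 ≤ p := (Fact.out : p.Prime).two_le
    have hp0 : 0 < p := by omega
    -- expansion
    have hexp : ζ ^ p - 1 = t ^ p + ∑ i ∈ Finset.range p \ {0}, t ^ i * (p.choose i : K) := by
      have hb : (t + 1) ^ p = ∑ i ∈ Finset.range (p + 1), t ^ i * 1 ^ (p - i) * (p.choose i : K) :=
        add_pow t 1 p
      have hz : ζ = t + 1 := by ring
      have h0 : (0 : ℕ) ∈ Finset.range p := Finset.mem_range.mpr hp0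
      rw [hz, hb, Finset.sum_range_succ, ← Finset.sum_sdiff (Finset.singleton_subset_iff.mpr h0)]
      simp only [Finset.sum_singleton, pow_zero, one_pow, one_mul, mul_one,
        Nat.choose_zero_right, Nat.cast_one, Nat.choose_self]
      ring
    -- bound the middle sum
    have hub : ‖∑ i ∈ Finset.range p \ {0}, t ^ i * (p.choose i : K)‖ ≤ (p : ℝ)⁻¹ * ‖t‖ ^ (p - 1) := by
      apply IsUltrametricDist.norm_sum_le_of_forall_le_of_nonneg
      · positivity
      · intro i hi
        simp only [Finset.mem_sdiff, Finset.mem_range, Finset.mem_singleton] at hi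
        obtain ⟨hip, hi0⟩ := hi
        have hdvd : p ∣ p.choose i := Nat.Prime.dvd_choose_self (Fact.out) hi0 hip
        obtain ⟨c, hc⟩ := hdvd
        rw [norm_mul, hc, Nat.cast_mul, norm_mul, norm_p_cast hiso, norm_pow]
        calc ‖t‖ ^ i * ((p : ℝ)⁻¹ * ‖(c : K)‖)
            ≤ ‖t‖ ^ (p - 1) * ((p : ℝ)⁻¹ * 1) := by
              apply mul_le_mul
              · exact pow_le_pow_right₀ hcon (by omega)
              · exact mul_le_mul_of_nonneg_left (norm_natCast_le_one hiso c) (by positivity)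
              · positivity
              · positivity
          _ = (p : ℝ)⁻¹ * ‖t‖ ^ (p - 1) := by ring
    have hlt : ‖∑ i ∈ Finset.range p \ {0}, t ^ i * (p.choose i : K)‖ < ‖t ^ p‖ := by
      rw [norm_pow]
      refine hub.trans_lt ?_
      have h1 : (p : ℝ)⁻¹ * ‖t‖ ^ (p - 1) < 1 * ‖t‖ ^ (p - 1) := by
        apply mul_lt_mul_of_pos_right
        · rw [inv_lt_one_iff₀]; right; exact_mod_cast hp2.trans_lt' one_lt_two
        · positivity
      refine h1.trans_le ?_
      rw [one_mul]
      exact pow_le_pow_right₀ hcon (by omega)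
    have hmax : ‖ζ ^ p - 1‖ = ‖t ^ p‖ := by
      rw [hexp, IsUltrametricDist.norm_add_eq_max_of_norm_ne_norm (by exact hlt.ne'),
        max_eq_left hlt.le]
    rw [hmax, norm_pow] at ihp
    exact absurd ihp (not_lt.mpr (one_le_pow₀ hcon))

end Aux

/-- For `m ∈ ℤ_p`, the binomial series
`(1+X)^m = 1 + Σ_{i≥1} (m(m-1)⋯(m-i+1)/i!)·X^i` has all coefficients in `ℤ_p`
(i.e. of norm at most `1`), and for any `p`-power root of unity `ζ`, the series
evaluated at `X = ζ - 1` sums to `ζ^c` for any natural number `c ≡ m` modulo the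
order of `ζ`. -/
theorem binomial_series_integral_coeffs_and_eval_at_root_of_unity
    {p : ℕ} [Fact p.Prime]
    {K : Type*} [NormedField K] [IsUltrametricDist K] [CompleteSpace K]
    [Algebra ℚ_[p] K] (hiso : ∀ a : ℚ_[p], ‖algebraMap ℚ_[p] K a‖ = ‖a‖)
    (m : ℤ_[p]) :
    (∀ i : ℕ, ‖binomCoeff m i‖ ≤ 1) ∧
    ∀ ζ : K, (∃ k : ℕ, ζ ^ p ^ k = 1) → ∀ c : ℕ, ((orderOf ζ : ℤ_[p]) ∣ m - (c : ℤ_[p])) →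
      HasSum (fun i : ℕ => algebraMap ℚ_[p] K (binomCoeff m i) * (ζ - 1) ^ i) (ζ ^ c) := by
  refine ⟨fun i => norm_binomCoeff_le m i, ?_⟩
  rintro ζ ⟨k, hk⟩ c hdvd
  have halg : Isometry (algebraMap ℚ_[p] K) :=
    AddMonoidHomClass.isometry_of_norm _ hiso
  set t : K := ζ - 1 with ht
  have htlt : ‖t‖ < 1 := norm_sub_one_lt hiso k ζ hk
  -- uniform bound
  have hbound : ∀ (m' : ℤ_[p]) (i : ℕ),
      ‖algebraMap ℚ_[p] K (binomCoeff m' i) * t ^ i‖ ≤ ‖t‖ ^ i := by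
    intro m' i
    rw [norm_mul, hiso, norm_pow]
    calc ‖binomCoeff m' i‖ * ‖t‖ ^ i ≤ 1 * ‖t‖ ^ i :=
          mul_le_mul_of_nonneg_right (norm_binomCoeff_le m' i) (by positivity)
      _ = ‖t‖ ^ i := one_mul _
  have hgeo : Summable fun i : ℕ => ‖t‖ ^ i :=
    summable_geometric_of_lt_one (norm_nonneg t) htlt
  have hsummable : ∀ m' : ℤ_[p],
      Summable fun i : ℕ => algebraMap ℚ_[p] K (binomCoeff m' i) * t ^ i := fun m' =>
    Summable.of_norm_bounded hgeo (hbound m')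
  set F : ℤ_[p] → K := fun m' => ∑' i : ℕ, algebraMap ℚ_[p] K (binomCoeff m' i) * t ^ i with hF
  have hFcont : Continuous F := by
    apply continuous_tsum (u := fun i => ‖t‖ ^ i) _ hgeo (fun i m' => hbound m' i)
    intro i
    exact (halg.continuous.comp (continuous_binomCoeff i)).mul continuous_const
  have hFnat : ∀ n : ℕ, F (n : ℤ_[p]) = ζ ^ n := by
    intro n
    have hval : ∀ i : ℕ, algebraMap ℚ_[p] K (binomCoeff (n : ℤ_[p]) i) * t ^ i
        = t ^ i * 1 ^ (n - i) * (n.choose i : K) := by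
      intro i
      rw [binomCoeff_natCast, map_natCast, one_pow]
      ring
    have hz : ∀ i : ℕ, i ∉ Finset.range (n + 1) →
        algebraMap ℚ_[p] K (binomCoeff (n : ℤ_[p]) i) * t ^ i = 0 := by
      intro i hi
      rw [hval i, Nat.choose_eq_zero_of_lt (by simpa using hi)]
      simp
    rw [hF]
    simp only
    rw [tsum_eq_sum hz]
    calc (∑ i ∈ Finset.range (n + 1), algebraMap ℚ_[p] K (binomCoeff (n : ℤ_[p]) i) * t ^ i)
        = ∑ i ∈ Finset.range (n + 1), t ^ i * 1 ^ (n - i) * (n.choose i : K) :=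
          Finset.sum_congr rfl fun i _ => hval i
      _ = (t + 1) ^ n := (add_pow t 1 n).symm
      _ = ζ ^ n := by rw [ht]; ring_nf
  obtain ⟨u, hu⟩ := hdvd
  have hζd : ζ ^ orderOf ζ = 1 := pow_orderOf_eq_one ζ
  have hG : F ∘ (fun x : ℤ_[p] => (c : ℤ_[p]) + (orderOf ζ : ℤ_[p]) * x) ∘ (Nat.cast : ℕ → ℤ_[p])
      = (fun _ : ℤ_[p] => ζ ^ c) ∘ (fun x : ℤ_[p] => (c : ℤ_[p]) + (orderOf ζ : ℤ_[p]) * x) ∘ (Nat.cast : ℕ → ℤ_[p]) := by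
    funext n
    simp only [Function.comp_apply]
    have hcast : (c : ℤ_[p]) + (orderOf ζ : ℤ_[p]) * (n : ℤ_[p]) = ((c + orderOf ζ * n : ℕ) : ℤ_[p]) := by
      push_cast; ring
    rw [hcast, hFnat, pow_add, pow_mul, hζd, one_pow, mul_one]
  have heq : F ∘ (fun x : ℤ_[p] => (c : ℤ_[p]) + (orderOf ζ : ℤ_[p]) * x)
      = (fun _ : ℤ_[p] => ζ ^ c) := by
    apply PadicInt.denseRange_natCast.equalizer
    · exact hFcont.comp (by continuity)
    · exact continuous_const
    · exact hG
  have hFm : F m = ζ ^ c := by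
    have hm : m = (c : ℤ_[p]) + (orderOf ζ : ℤ_[p]) * u := by
      have := hu
      linear_combination hu
    calc F m = (F ∘ (fun x : ℤ_[p] => (c : ℤ_[p]) + (orderOf ζ : ℤ_[p]) * x)) u := by
          rw [Function.comp_apply, ← hm]
      _ = ζ ^ c := by rw [heq]
  have := (hsummable m).hasSum
  rw [← hF] at *
  rw [show (∑' i : ℕ, algebraMap ℚ_[p] K (binomCoeff m i) * t ^ i) = F m from rfl, hFm] at this
  exact this
end

section
/- Let g be a positive integer, ξ a root of unity generating a Galois extension F[ξ]/F of degree g, m ∈ ℤ_p, and φ ∈ O_F[[X,Y]] irreducible with φ(0,0) = 0. If φ(X,Y)^g = (∏_{σ ∈ Gal(F[ξ]/F)} ((X+1)^m - σ(ξ)(Y+1))) · Θ(X,Y) for some Θ ∈ O_F[[X,Y]], then ξ = 1, g = 1, and φ is a unit multiple of (X+1)^m - (Y+1). -/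
open scoped Classical

/-- The two-variable power series `(1+X)^m` (binomial series in the first variable). -/
noncomputable def binomX {p : ℕ} [Fact p.Prime] {K : Type*} [NormedField K]
    [Algebra ℚ_[p] K] (m : ℤ_[p]) : MvPowerSeries (Fin 2) K :=
  fun d => if d 1 = 0 then algebraMap ℚ_[p] K (binomCoeff m (d 0)) else 0

/-- The two-variable power series `Y + 1`. -/
noncomputable def yPlusOne {K : Type*} [NormedField K] : MvPowerSeries (Fin 2) K :=
  MvPowerSeries.X 1 + 1

set_option maxHeartbeats 1600000
set_option linter.unusedSectionVars false

namespace S17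

open MvPowerSeries Finset IsUltrametricDist

variable {K : Type*} [NormedField K] [IsUltrametricDist K]

/-- helper: ultrametric bound for subtraction -/
lemma unorm_sub_le_max (x y : K) : ‖x - y‖ ≤ max ‖x‖ ‖y‖ := by
  rw [sub_eq_add_neg]
  simpa using norm_add_le_max x (-y)

/-- The exponent `(t, b)` as a finsupp. -/
noncomputable def e (t b : ℕ) : Fin 2 →₀ ℕ := Finsupp.single 0 t + Finsupp.single 1 b

lemma e_apply0 (t b : ℕ) : e t b 0 = t := by simp [e]

lemma e_apply1 (t b : ℕ) : e t b 1 = b := by simp [e, Finsupp.single_apply]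

lemma e_eq (d : Fin 2 →₀ ℕ) : e (d 0) (d 1) = d := by
  ext x
  fin_cases x
  · simpa using e_apply0 (d 0) (d 1)
  · simpa using e_apply1 (d 0) (d 1)

lemma e_add (t b t' b' : ℕ) : e t b + e t' b' = e (t + t') (b + b') := by
  ext x
  fin_cases x
  · simp [e_apply0, e]
  · simp [e_apply1, e, Finsupp.single_apply]

lemma e_inj {t b t' b' : ℕ} (h : e t b = e t' b') : t = t' ∧ b = b' := by
  constructor
  · have := congrArg (fun d : Fin 2 →₀ ℕ => d 0) h
    simpa [e_apply0] using this
  · have := congrArg (fun d : Fin 2 →₀ ℕ => d 1) h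
    simpa [e_apply1] using this

lemma e_zero : e 0 0 = 0 := by simp [e]

/-- Coefficient accessor. -/
noncomputable def cf (F : MvPowerSeries (Fin 2) K) (t b : ℕ) : K := coeff (e t b) F

lemma cf_def (F : MvPowerSeries (Fin 2) K) (t b : ℕ) : cf F t b = F (e t b) := rfl

lemma mv_ext {F G : MvPowerSeries (Fin 2) K} (h : ∀ t b, cf F t b = cf G t b) : F = G := by
  ext d
  have := h (d 0) (d 1)
  rwa [cf, cf, e_eq] at this

lemma cf_add (F G : MvPowerSeries (Fin 2) K) (t b : ℕ) :
    cf (F + G) t b = cf F t b + cf G t b := by simp [cf]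

lemma cf_sub (F G : MvPowerSeries (Fin 2) K) (t b : ℕ) :
    cf (F - G) t b = cf F t b - cf G t b := by simp [cf]

lemma cf_neg (F : MvPowerSeries (Fin 2) K) (t b : ℕ) : cf (-F) t b = -cf F t b := by simp [cf]

lemma cf_zero (t b : ℕ) : cf (0 : MvPowerSeries (Fin 2) K) t b = 0 := by simp [cf]

lemma cf_one (t b : ℕ) : cf (1 : MvPowerSeries (Fin 2) K) t b =
    if t = 0 ∧ b = 0 then 1 else 0 := by
  rw [cf, coeff_one]
  by_cases h : t = 0 ∧ b = 0
  · obtain ⟨rfl, rfl⟩ := h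
    simp [e_zero]
  · rw [if_neg h, if_neg]
    intro hc
    have := e_inj (t' := 0) (b' := 0) (by rw [hc, e_zero])
    exact h this

lemma cf_C (a : K) (t b : ℕ) :
    cf (C (σ := Fin 2) (R := K) a) t b = if t = 0 ∧ b = 0 then a else 0 := by
  rw [cf, coeff_C]
  by_cases h : t = 0 ∧ b = 0
  · obtain ⟨rfl, rfl⟩ := h
    simp [e_zero]
  · rw [if_neg h, if_neg]
    intro hc
    have := e_inj (t' := 0) (b' := 0) (by rw [hc, e_zero])
    exact h this

lemma cf_C_mul (a : K) (F : MvPowerSeries (Fin 2) K) (t b : ℕ) :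
    cf (C (σ := Fin 2) (R := K) a * F) t b = a * cf F t b := by
  simp [cf, coeff_C_mul]

/-- The key convolution formula for coefficients of products. -/
lemma cf_mul (F G : MvPowerSeries (Fin 2) K) (t b : ℕ) :
    cf (F * G) t b = ∑ x ∈ antidiagonal t, ∑ y ∈ antidiagonal b,
      cf F x.1 y.1 * cf G x.2 y.2 := by
  rw [cf, coeff_mul]
  rw [← Finset.sum_product']
  refine Finset.sum_nbij' (fun uv => ((uv.1 0, uv.2 0), (uv.1 1, uv.2 1)))
    (fun xy => (e xy.1.1 xy.2.1, e xy.1.2 xy.2.2)) ?_ ?_ ?_ ?_ ?_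
  · intro uv huv
    rw [Finset.HasAntidiagonal.mem_antidiagonal] at huv
    simp only [Finset.mem_product, Finset.HasAntidiagonal.mem_antidiagonal]
    constructor
    · have := congrArg (fun d : Fin 2 →₀ ℕ => d 0) huv
      simpa [e_apply0] using this
    · have := congrArg (fun d : Fin 2 →₀ ℕ => d 1) huv
      simpa [e_apply1] using this
  · intro xy hxy
    simp only [Finset.mem_product, Finset.HasAntidiagonal.mem_antidiagonal] at hxy
    rw [Finset.HasAntidiagonal.mem_antidiagonal, e_add, hxy.1, hxy.2]
  · intro uv huv
    simp only
    rw [e_eq, e_eq]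
  · intro xy hxy
    simp only [e_apply0, e_apply1]
  · intro uv huv
    simp only [cf, e_eq]

/-- Bounded-by-one predicate. -/
def Bdd (F : MvPowerSeries (Fin 2) K) : Prop := ∀ t b, ‖cf F t b‖ ≤ 1

/-- No `Y`-variable predicate. -/
def Yfree (F : MvPowerSeries (Fin 2) K) : Prop := ∀ t b, b ≠ 0 → cf F t b = 0

lemma Bdd.add {F G : MvPowerSeries (Fin 2) K} (hF : Bdd F) (hG : Bdd G) : Bdd (F + G) :=
  fun t b => by
    rw [cf_add]
    calc ‖cf F t b + cf G t b‖ ≤ max ‖cf F t b‖ ‖cf G t b‖ := norm_add_le_max _ _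
    _ ≤ 1 := max_le (hF t b) (hG t b)

lemma Bdd.sub {F G : MvPowerSeries (Fin 2) K} (hF : Bdd F) (hG : Bdd G) : Bdd (F - G) :=
  fun t b => by
    rw [cf_sub]
    exact (unorm_sub_le_max _ _).trans (max_le (hF t b) (hG t b))

lemma Bdd.neg {F : MvPowerSeries (Fin 2) K} (hF : Bdd F) : Bdd (-F) :=
  fun t b => by rw [cf_neg, norm_neg]; exact hF t b

lemma Bdd.mul {F G : MvPowerSeries (Fin 2) K} (hF : Bdd F) (hG : Bdd G) : Bdd (F * G) :=
  fun t b => by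
    rw [cf_mul]
    refine norm_sum_le_of_forall_le_of_nonneg zero_le_one fun x hx => ?_
    refine norm_sum_le_of_forall_le_of_nonneg zero_le_one fun y hy => ?_
    calc ‖cf F x.1 y.1 * cf G x.2 y.2‖ = ‖cf F x.1 y.1‖ * ‖cf G x.2 y.2‖ := norm_mul _ _
    _ ≤ 1 * 1 := mul_le_mul (hF _ _) (hG _ _) (norm_nonneg _) zero_le_one
    _ = 1 := mul_one 1

lemma bdd_one : Bdd (1 : MvPowerSeries (Fin 2) K) := fun t b => by
  rw [cf_one]; split <;> simp

lemma bdd_C {a : K} (ha : ‖a‖ ≤ 1) : Bdd (C (σ := Fin 2) (R := K) a) := fun t b => by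
  rw [cf_C]; split <;> simp [ha]

lemma Bdd.prod {ι : Type*} {s : Finset ι} {F : ι → MvPowerSeries (Fin 2) K}
    (h : ∀ i ∈ s, Bdd (F i)) : Bdd (∏ i ∈ s, F i) := by
  classical
  induction s using Finset.cons_induction with
  | empty => simpa using bdd_one
  | cons j s hj ih =>
    rw [Finset.prod_cons]
    exact (h j (Finset.mem_cons_self j s)).mul
      (ih fun i hi => h i (Finset.mem_cons_of_mem hi))

lemma Bdd.pow {F : MvPowerSeries (Fin 2) K} (hF : Bdd F) (n : ℕ) : Bdd (F ^ n) := by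
  induction n with
  | zero => simpa using bdd_one
  | succ n ih => rw [pow_succ]; exact ih.mul hF

lemma Yfree.mul {F G : MvPowerSeries (Fin 2) K} (hF : Yfree F) (hG : Yfree G) :
    Yfree (F * G) := by
  intro t b hb
  rw [cf_mul]
  refine Finset.sum_eq_zero fun x hx => Finset.sum_eq_zero fun y hy => ?_
  rw [Finset.HasAntidiagonal.mem_antidiagonal] at hy
  rcases Nat.eq_zero_or_pos y.1 with h1 | h1
  · have h2 : y.2 ≠ 0 := by omega
    rw [hG _ _ h2, mul_zero]
  · rw [hF _ _ (by omega), zero_mul]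

lemma Yfree.add {F G : MvPowerSeries (Fin 2) K} (hF : Yfree F) (hG : Yfree G) :
    Yfree (F + G) := fun t b hb => by rw [cf_add, hF t b hb, hG t b hb, add_zero]

lemma Yfree.sub {F G : MvPowerSeries (Fin 2) K} (hF : Yfree F) (hG : Yfree G) :
    Yfree (F - G) := fun t b hb => by rw [cf_sub, hF t b hb, hG t b hb, sub_zero]

lemma yfree_one : Yfree (1 : MvPowerSeries (Fin 2) K) := fun t b hb => by
  rw [cf_one, if_neg]; tauto

lemma yfree_C (a : K) : Yfree (C (σ := Fin 2) (R := K) a) := fun t b hb => by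
  rw [cf_C, if_neg]; tauto

lemma Yfree.pow {F : MvPowerSeries (Fin 2) K} (hF : Yfree F) (n : ℕ) : Yfree (F ^ n) := by
  induction n with
  | zero => simpa using yfree_one
  | succ n ih => rw [pow_succ]; exact ih.mul hF

/-- Convolution against a `Y`-free series. -/
lemma cf_yfree_mul {S : MvPowerSeries (Fin 2) K} (hS : Yfree S) (G : MvPowerSeries (Fin 2) K)
    (t b : ℕ) : cf (S * G) t b = ∑ x ∈ antidiagonal t, cf S x.1 0 * cf G x.2 b := by
  rw [cf_mul]
  refine Finset.sum_congr rfl fun x hx => ?_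
  rw [Finset.sum_eq_single (0, b)]
  · intro y hy hne
    rw [Finset.HasAntidiagonal.mem_antidiagonal] at hy
    have h1 : y.1 ≠ 0 := by
      intro h0
      exact hne (by rw [Prod.ext_iff]; omega)
    rw [hS _ _ h1, zero_mul]
  · intro hmem
    exact absurd (by rw [Finset.HasAntidiagonal.mem_antidiagonal]; omega) hmem

/-- Coefficients of `Y * G` where `Y = X 1`. -/
lemma cf_Ymul (G : MvPowerSeries (Fin 2) K) (t b : ℕ) :
    cf ((X 1 : MvPowerSeries (Fin 2) K) * G) t b = if b = 0 then 0 else cf G t (b - 1) := by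
  have hX : ∀ i j : ℕ, cf (X 1 : MvPowerSeries (Fin 2) K) i j =
      if i = 0 ∧ j = 1 then 1 else 0 := by
    intro i j
    rw [cf, X, coeff_monomial]
    by_cases h : i = 0 ∧ j = 1
    · obtain ⟨rfl, rfl⟩ := h
      have he : e 0 1 = Finsupp.single 1 1 := by simp [e]
      rw [if_pos he, if_pos ⟨rfl, rfl⟩]
    · rw [if_neg h, if_neg]
      intro hc
      have : e i j = e 0 1 := by rw [hc]; simp [e]
      exact h (e_inj this)
  rw [cf_mul]
  by_cases hb : b = 0
  · subst hb
    refine Finset.sum_eq_zero fun x hx => Finset.sum_eq_zero fun y hy => ?_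
    rw [Finset.HasAntidiagonal.mem_antidiagonal] at hy
    rw [hX, if_neg (by omega), zero_mul]
  · rw [Finset.sum_eq_single (0, t)]
    · rw [Finset.sum_eq_single (1, b - 1)]
      · rw [hX, if_pos ⟨rfl, rfl⟩, one_mul, if_neg hb]
      · intro y hy hne
        rw [Finset.HasAntidiagonal.mem_antidiagonal] at hy
        rw [hX, if_neg, zero_mul]
        intro ⟨h1, h2⟩
        exact hne (by rw [Prod.ext_iff]; omega)
      · intro hmem
        exact absurd (by rw [Finset.HasAntidiagonal.mem_antidiagonal]; omega) hmem
    · intro x hx hne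
      rw [Finset.HasAntidiagonal.mem_antidiagonal] at hx
      refine Finset.sum_eq_zero fun y hy => ?_
      rw [hX, if_neg, zero_mul]
      intro ⟨h1, h2⟩
      exact hne (by rw [Prod.ext_iff]; omega)
    · intro hmem
      exact absurd (by rw [Finset.HasAntidiagonal.mem_antidiagonal]; omega) hmem

lemma bdd_X1 : Bdd (X 1 : MvPowerSeries (Fin 2) K) := by
  intro t b
  rw [cf, X, coeff_monomial]
  split <;> simp


open MvPowerSeries Finset IsUltrametricDist

variable {K : Type*} [NormedField K] [IsUltrametricDist K]

/-- The `Y^b`-slice of a two-variable power series, as a `Y`-free series. -/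
noncomputable def slice (F : MvPowerSeries (Fin 2) K) (b : ℕ) : MvPowerSeries (Fin 2) K :=
  fun d => if d 1 = 0 then cf F (d 0) b else 0

lemma cf_slice (F : MvPowerSeries (Fin 2) K) (b t b' : ℕ) :
    cf (slice F b) t b' = if b' = 0 then cf F t b else 0 := by
  show (slice F b) (e t b') = _
  rw [slice]
  simp only [e_apply0, e_apply1]

lemma slice_yfree (F : MvPowerSeries (Fin 2) K) (b : ℕ) : Yfree (slice F b) :=
  fun t b' hb' => by rw [cf_slice, if_neg hb']

lemma slice_bdd {F : MvPowerSeries (Fin 2) K} (hF : Bdd F) (b : ℕ) : Bdd (slice F b) :=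
  fun t b' => by
    rw [cf_slice]
    split
    · exact hF t b
    · simp

lemma slice_add (F G : MvPowerSeries (Fin 2) K) (b : ℕ) :
    slice (F + G) b = slice F b + slice G b := by
  apply mv_ext
  intro t b'
  rw [cf_add, cf_slice, cf_slice, cf_slice, cf_add]
  split <;> simp

lemma slice_of_yfree {F : MvPowerSeries (Fin 2) K} (hF : Yfree F) : slice F 0 = F := by
  apply mv_ext
  intro t b'
  rw [cf_slice]
  split
  · next hb => rw [hb]
  · next hb => rw [hF t b' hb]

lemma slice_eq_zero {F : MvPowerSeries (Fin 2) K} (hF : Yfree F) {c : ℕ} (hc : c ≠ 0) :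
    slice F c = 0 := by
  apply mv_ext
  intro t b'
  rw [cf_slice, cf_zero]
  split
  · exact hF t c hc
  · rfl

section Division

variable [CompleteSpace K]
variable {h : MvPowerSeries (Fin 2) K} {ρ : ℝ}

/-- Norm estimate for powers of `h`. -/
lemma pow_bound (hY : Yfree h) (hB : Bdd h) (hρ0 : 0 ≤ ρ) (hρ1 : ρ ≤ 1)
    (hh0 : ‖cf h 0 0‖ ≤ ρ) : ∀ b t, ‖cf (h ^ b) t 0‖ ≤ ρ ^ (b - t) := by
  intro b
  induction b with
  | zero =>
    intro t
    rcases Nat.eq_zero_or_pos t with rfl | ht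
    · simp [cf_one]
    · rw [pow_zero, cf_one, if_neg (by omega)]
      simp
  | succ b ih =>
    intro t
    rw [pow_succ, mul_comm, cf_yfree_mul hY]
    refine norm_sum_le_of_forall_le_of_nonneg (pow_nonneg hρ0 _) fun x hx => ?_
    rw [Finset.HasAntidiagonal.mem_antidiagonal] at hx
    rw [norm_mul]
    rcases Nat.eq_zero_or_pos x.1 with h1 | h1
    · have hx2 : x.2 = t := by omega
      calc ‖cf h x.1 0‖ * ‖cf (h ^ b) x.2 0‖ ≤ ρ * ρ ^ (b - t) := by
            refine mul_le_mul ?_ ?_ (norm_nonneg _) hρ0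
            · rw [h1]; exact hh0
            · rw [hx2]; exact ih t
      _ = ρ ^ ((b - t) + 1) := by rw [pow_succ, mul_comm]
      _ ≤ ρ ^ (b + 1 - t) := pow_le_pow_of_le_one hρ0 hρ1 (by omega)
    · calc ‖cf h x.1 0‖ * ‖cf (h ^ b) x.2 0‖ ≤ 1 * ρ ^ (b - x.2) := by
            refine mul_le_mul (hB x.1 0) (ih x.2) (norm_nonneg _) zero_le_one
      _ = ρ ^ (b - x.2) := one_mul _
      _ ≤ ρ ^ (b + 1 - t) := pow_le_pow_of_le_one hρ0 hρ1 (by omega)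

/-- Norm estimate for `A * h^c`. -/
lemma mixed_bound (hY : Yfree h) (hB : Bdd h) (hρ0 : 0 ≤ ρ) (hρ1 : ρ ≤ 1)
    (hh0 : ‖cf h 0 0‖ ≤ ρ) {A : MvPowerSeries (Fin 2) K} (hAY : Yfree A) (hAB : Bdd A)
    (c t : ℕ) : ‖cf (A * h ^ c) t 0‖ ≤ ρ ^ (c - t) := by
  rw [cf_yfree_mul hAY]
  refine norm_sum_le_of_forall_le_of_nonneg (pow_nonneg hρ0 _) fun x hx => ?_
  rw [Finset.HasAntidiagonal.mem_antidiagonal] at hx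
  rw [norm_mul]
  calc ‖cf A x.1 0‖ * ‖cf (h ^ c) x.2 0‖ ≤ 1 * ρ ^ (c - x.2) :=
        mul_le_mul (hAB x.1 0) (pow_bound hY hB hρ0 hρ1 hh0 c x.2) (norm_nonneg _) zero_le_one
  _ = ρ ^ (c - x.2) := one_mul _
  _ ≤ ρ ^ (c - t) := pow_le_pow_of_le_one hρ0 hρ1 (by omega)

/-- Summability of the slice sums. -/
lemma summable_form (hY : Yfree h) (hB : Bdd h) (hρ0 : 0 < ρ) (hρ1 : ρ < 1)
    (hh0 : ‖cf h 0 0‖ ≤ ρ) (A : ℕ → MvPowerSeries (Fin 2) K) (hAY : ∀ c, Yfree (A c))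
    (hAB : ∀ c, Bdd (A c)) (t : ℕ) :
    Summable (fun c => cf (A c * h ^ c) t 0) := by
  refine Summable.of_norm_bounded (g := fun c => ρ ^ (c - t)) ?_ ?_
  · refine (summable_nat_add_iff t).mp ?_
    have : (fun n : ℕ => ρ ^ (n + t - t)) = fun n : ℕ => ρ ^ n := by
      funext n
      congr 1
      omega
    rw [this]
    exact summable_geometric_of_lt_one hρ0.le hρ1
  · intro c
    exact mixed_bound hY hB hρ0.le hρ1.le hh0 (hAY c) (hAB c) c t

/-- The quotient in the division of `F` by `Y - h`. -/
noncomputable def qdiv (h F : MvPowerSeries (Fin 2) K) : MvPowerSeries (Fin 2) K :=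
  fun d => ∑' c, cf (slice F (d 1 + 1 + c) * h ^ c) (d 0) 0

/-- The remainder (a `Y`-free series) in the division of `F` by `Y - h`. -/
noncomputable def rem (h F : MvPowerSeries (Fin 2) K) : MvPowerSeries (Fin 2) K :=
  fun d => if d 1 = 0 then ∑' c, cf (slice F c * h ^ c) (d 0) 0 else 0

lemma cf_qdiv (h F : MvPowerSeries (Fin 2) K) (t b : ℕ) :
    cf (qdiv h F) t b = ∑' c, cf (slice F (b + 1 + c) * h ^ c) t 0 := by
  show (qdiv h F) (e t b) = _
  rw [qdiv]
  simp only [e_apply0, e_apply1]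

lemma cf_rem (h F : MvPowerSeries (Fin 2) K) (t b : ℕ) :
    cf (rem h F) t b = if b = 0 then ∑' c, cf (slice F c * h ^ c) t 0 else 0 := by
  show (rem h F) (e t b) = _
  rw [rem]
  simp only [e_apply0, e_apply1]

lemma rem_yfree (h F : MvPowerSeries (Fin 2) K) : Yfree (rem h F) :=
  fun t b hb => by rw [cf_rem, if_neg hb]

lemma qdiv_bdd (hB : Bdd h) {F : MvPowerSeries (Fin 2) K} (hF : Bdd F) : Bdd (qdiv h F) := by
  intro t b
  rw [cf_qdiv]
  refine norm_tsum_le_of_forall_le_of_nonneg zero_le_one fun c => ?_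
  exact ((slice_bdd hF _).mul (hB.pow c)) t 0

lemma rem_bdd (hB : Bdd h) {F : MvPowerSeries (Fin 2) K} (hF : Bdd F) : Bdd (rem h F) := by
  intro t b
  rw [cf_rem]
  split
  · refine norm_tsum_le_of_forall_le_of_nonneg zero_le_one fun c => ?_
    exact ((slice_bdd hF _).mul (hB.pow c)) t 0
  · simp

variable (hY : Yfree h) (hB : Bdd h) (hρ0 : 0 < ρ) (hρ1 : ρ < 1) (hh0 : ‖cf h 0 0‖ ≤ ρ)

include hY hB hρ0 hρ1 hh0

/-- **Division identity**: `F = (Y - h) * q + r`. -/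
theorem div_ex {F : MvPowerSeries (Fin 2) K} (hF : Bdd F) :
    F = ((X 1 : MvPowerSeries (Fin 2) K) - h) * qdiv h F + rem h F := by
  have hsum : ∀ (A : ℕ → MvPowerSeries (Fin 2) K), (∀ c, Yfree (A c)) → (∀ c, Bdd (A c)) →
      ∀ t, Summable (fun c => cf (A c * h ^ c) t 0) :=
    fun A hAY hAB t => summable_form hY hB hρ0 hρ1 hh0 A hAY hAB t
  have hsl : ∀ k t, Summable (fun c => cf (slice F (k + c) * h ^ c) t 0) :=
    fun k t => hsum (fun c => slice F (k + c)) (fun c => slice_yfree F _)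
      (fun c => slice_bdd hF _) t
  apply mv_ext
  intro t b
  rw [cf_add, sub_mul, cf_sub, cf_Ymul, cf_yfree_mul hY, cf_rem]
  -- rewrite the convolution sum against h as a shifted tsum
  have key : ∀ b' : ℕ, (∑ x ∈ antidiagonal t, cf h x.1 0 * cf (qdiv h F) x.2 b') =
      ∑' c, cf (slice F (b' + 1 + c) * h ^ (c + 1)) t 0 := by
    intro b'
    have step1 : ∀ x : ℕ × ℕ, cf h x.1 0 * cf (qdiv h F) x.2 b' =
        ∑' c, cf h x.1 0 * cf (slice F (b' + 1 + c) * h ^ c) x.2 0 := by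
      intro x
      rw [cf_qdiv, tsum_mul_left]
    rw [Finset.sum_congr rfl fun x _ => step1 x]
    have swap := Summable.tsum_finsetSum (s := antidiagonal t)
      (f := fun (x : ℕ × ℕ) (c : ℕ) => cf h x.1 0 * cf (slice F (b' + 1 + c) * h ^ c) x.2 0)
      (fun x _ => Summable.mul_left _ (hsl (b' + 1) x.2))
    rw [← swap]
    refine tsum_congr fun c => ?_
    have : (∑ x ∈ antidiagonal t, cf h x.1 0 * cf (slice F (b' + 1 + c) * h ^ c) x.2 0) =
        cf (h * (slice F (b' + 1 + c) * h ^ c)) t 0 := (cf_yfree_mul hY _ t 0).symm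
    rw [this]
    congr 1
    ring
  by_cases hb : b = 0
  · subst hb
    rw [if_pos rfl, if_pos rfl]
    have expand : (∑' c, cf (slice F c * h ^ c) t 0) =
        cf (slice F 0 * h ^ 0) t 0 + ∑' c, cf (slice F (c + 1) * h ^ (c + 1)) t 0 :=
      Summable.tsum_eq_zero_add (by simpa using hsl 0 t)
    have e1 : cf (slice F 0 * h ^ 0) t 0 = cf F t 0 := by
      rw [pow_zero, mul_one, cf_slice, if_pos rfl]
    have e2 : (∑' c, cf (slice F (0 + 1 + c) * h ^ (c + 1)) t 0) =
        ∑' c, cf (slice F (c + 1) * h ^ (c + 1)) t 0 := by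
      refine tsum_congr fun c => ?_
      have hi : 0 + 1 + c = c + 1 := by omega
      rw [hi]
    rw [key 0, expand, e1, e2]
    ring
  · rw [if_neg hb, if_neg hb]
    obtain ⟨b', rfl⟩ : ∃ b', b = b' + 1 := ⟨b - 1, by omega⟩
    have expand : cf (qdiv h F) t (b' + 1 - 1) =
        cf (slice F (b' + 1) * h ^ 0) t 0 + ∑' c, cf (slice F (b' + 1 + (c + 1)) * h ^ (c + 1)) t 0 := by
      have : b' + 1 - 1 = b' := by omega
      rw [this, cf_qdiv]
      have := Summable.tsum_eq_zero_add (f := fun c => cf (slice F (b' + 1 + c) * h ^ c) t 0)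
        (hsl (b' + 1) t)
      simpa using this
    have e1 : cf (slice F (b' + 1) * h ^ 0) t 0 = cf F t (b' + 1) := by
      rw [pow_zero, mul_one, cf_slice, if_pos rfl]
    have e2 : (∑' c, cf (slice F (b' + 1 + 1 + c) * h ^ (c + 1)) t 0) =
        ∑' c, cf (slice F (b' + 1 + (c + 1)) * h ^ (c + 1)) t 0 := by
      refine tsum_congr fun c => ?_
      have hi : b' + 1 + 1 + c = b' + 1 + (c + 1) := by omega
      rw [hi]
    rw [key (b' + 1), expand, e1, e2]
    ring

/-- `rem` of a `Y`-free series. -/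
theorem rem_of_yfree {F : MvPowerSeries (Fin 2) K} (hFY : Yfree F) : rem h F = F := by
  apply mv_ext
  intro t b
  rw [cf_rem]
  by_cases hb : b = 0
  · subst hb
    rw [if_pos rfl]
    rw [tsum_eq_single 0]
    · rw [pow_zero, mul_one, cf_slice, if_pos rfl]
    · intro c hc
      rw [slice_eq_zero hFY hc, zero_mul, cf_zero]
  · rw [if_neg hb, hFY t b hb]

/-- `rem` kills multiples of `Y - h`. -/
theorem rem_of_mul_self {G : MvPowerSeries (Fin 2) K} (hG : Bdd G) :
    rem h (((X 1 : MvPowerSeries (Fin 2) K) - h) * G) = 0 := by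
  have hXh : Bdd ((X 1 : MvPowerSeries (Fin 2) K) - h) := bdd_X1.sub hB
  have hprod : Bdd (((X 1 : MvPowerSeries (Fin 2) K) - h) * G) := hXh.mul hG
  -- slices of (Y - h) * G
  have hslice : ∀ c : ℕ, slice (((X 1 : MvPowerSeries (Fin 2) K) - h) * G) c =
      (if c = 0 then 0 else slice G (c - 1)) - h * slice G c := by
    intro c
    apply mv_ext
    intro t b
    have hhs : cf (h * slice G c) t b = if b = 0 then cf (h * G) t c else 0 := by
      by_cases hb : b = 0
      · subst hb
        rw [if_pos rfl, cf_yfree_mul hY, cf_yfree_mul hY]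
        refine Finset.sum_congr rfl fun x hx => ?_
        rw [cf_slice, if_pos rfl]
      · rw [if_neg hb, (hY.mul (slice_yfree G c)) t b hb]
    rw [cf_slice, cf_sub, hhs]
    by_cases hb : b = 0
    · subst hb
      rw [if_pos rfl, if_pos rfl, sub_mul, cf_sub, cf_Ymul]
      by_cases hc : c = 0
      · subst hc
        rw [if_pos rfl, if_pos rfl, cf_zero]
      · rw [if_neg hc, if_neg hc, cf_slice, if_pos rfl]
    · rw [if_neg hb, if_neg hb, sub_zero]
      split
      · rw [cf_zero]
      · rw [cf_slice, if_neg hb]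
  apply mv_ext
  intro t b
  rw [cf_rem, cf_zero]
  by_cases hb : b = 0
  swap
  · rw [if_neg hb]
  subst hb
  rw [if_pos rfl]
  set U : ℕ → K := fun c => cf (slice G c * h ^ (c + 1)) t 0 with hU
  have hUs : Summable U := by
    have := summable_form hY hB hρ0 hρ1 hh0 (fun c => slice G c * h) (fun c =>
      (slice_yfree G c).mul hY) (fun c => (slice_bdd hG c).mul hB) t
    refine this.congr fun c => ?_
    rw [hU]
    simp only
    congr 1
    rw [pow_succ]
    ring
  have hterm : ∀ c : ℕ, cf (slice (((X 1 : MvPowerSeries (Fin 2) K) - h) * G) c * h ^ c) t 0 =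
      (if c = 0 then 0 else U (c - 1)) - U c := by
    intro c
    rw [hslice c, sub_mul, cf_sub]
    congr 1
    · by_cases hc : c = 0
      · subst hc
        rw [if_pos rfl, if_pos rfl, zero_mul, cf_zero]
      · rw [if_neg hc, if_neg hc, hU]
        obtain ⟨c', rfl⟩ : ∃ c', c = c' + 1 := ⟨c - 1, by omega⟩
        simp only [Nat.add_sub_cancel]
    · rw [hU]
      simp only
      congr 1
      rw [pow_succ]
      ring
  have hTs : Summable (fun c => cf (slice (((X 1 : MvPowerSeries (Fin 2) K) - h) * G) c * h ^ c) t 0) :=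
    summable_form hY hB hρ0 hρ1 hh0 _ (fun c => slice_yfree _ c) (fun c => slice_bdd hprod c) t
  rw [tsum_congr hterm]
  have hUs' : Summable (fun c => U (c + 1)) := (summable_nat_add_iff 1).mpr hUs
  have hsplit : (∑' c, ((if c = 0 then 0 else U (c - 1)) - U c)) =
      (∑' c, (if c = 0 then (0:K) else U (c - 1))) - ∑' c, U c := by
    refine Summable.tsum_sub ?_ hUs
    · -- summable of shifted-with-zero
      have : (fun c => if c = 0 then (0:K) else U (c - 1)) = fun c =>
          (fun n => if n = 0 then (0:K) else U (n - 1)) c := rfl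
      refine (summable_nat_add_iff 1).mp ?_
      simpa using hUs
  rw [hsplit]
  have : (∑' c, (if c = 0 then (0:K) else U (c - 1))) = ∑' c, U c := by
    have h1 : (∑' c, (if c = 0 then (0:K) else U (c - 1))) =
        (if (0:ℕ) = 0 then (0:K) else U (0 - 1)) + ∑' c, (if c + 1 = 0 then (0:K) else U (c + 1 - 1)) := by
      refine Summable.tsum_eq_zero_add ?_
      refine (summable_nat_add_iff 1).mp ?_
      simpa using hUs
    rw [h1, if_pos rfl, zero_add]
    refine tsum_congr fun c => ?_
    rw [if_neg (by omega)]
    simp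
  rw [this, sub_self]

/-- `rem` is additive. -/
theorem rem_add {F G : MvPowerSeries (Fin 2) K} (hF : Bdd F) (hG : Bdd G) :
    rem h (F + G) = rem h F + rem h G := by
  apply mv_ext
  intro t b
  rw [cf_add, cf_rem, cf_rem, cf_rem]
  by_cases hb : b = 0
  · rw [if_pos hb, if_pos hb, if_pos hb]
    rw [← Summable.tsum_add (summable_form hY hB hρ0 hρ1 hh0 _ (fun c => slice_yfree F c)
      (fun c => slice_bdd hF c) t) (summable_form hY hB hρ0 hρ1 hh0 _ (fun c => slice_yfree G c)
      (fun c => slice_bdd hG c) t)]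
    refine tsum_congr fun c => ?_
    rw [slice_add, add_mul, cf_add]
  · rw [if_neg hb, if_neg hb, if_neg hb, add_zero]

/-- `rem` is multiplicative. -/
theorem rem_mul {F G : MvPowerSeries (Fin 2) K} (hF : Bdd F) (hG : Bdd G) :
    rem h (F * G) = rem h F * rem h G := by
  have hqF := qdiv_bdd hB hF
  have hqG := qdiv_bdd hB hG
  have hrF := rem_bdd hB hF
  have hrG := rem_bdd hB hG
  have hXh : Bdd ((X 1 : MvPowerSeries (Fin 2) K) - h) := bdd_X1.sub hB
  have step1 : F * G = ((X 1 : MvPowerSeries (Fin 2) K) - h) * (qdiv h F * G) + rem h F * G := by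
    conv_lhs => rw [div_ex hY hB hρ0 hρ1 hh0 hF]
    ring
  rw [step1, rem_add hY hB hρ0 hρ1 hh0 ((hXh.mul (hqF.mul hG))) (hrF.mul hG),
    rem_of_mul_self hY hB hρ0 hρ1 hh0 (hqF.mul hG), zero_add]
  have step2 : rem h F * G = ((X 1 : MvPowerSeries (Fin 2) K) - h) * (rem h F * qdiv h G) +
      rem h F * rem h G := by
    conv_lhs => rw [show rem h F * G = G * rem h F from mul_comm _ _,
      div_ex hY hB hρ0 hρ1 hh0 hG]
    ring
  rw [step2, rem_add hY hB hρ0 hρ1 hh0 ((hXh.mul (hrF.mul hqG))) (hrF.mul hrG),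
    rem_of_mul_self hY hB hρ0 hρ1 hh0 (hrF.mul hqG), zero_add]
  exact rem_of_yfree hY hB hρ0 hρ1 hh0 ((rem_yfree h F).mul (rem_yfree h G))

theorem rem_one : rem h (1 : MvPowerSeries (Fin 2) K) = 1 :=
  rem_of_yfree hY hB hρ0 hρ1 hh0 yfree_one

theorem rem_pow {F : MvPowerSeries (Fin 2) K} (hF : Bdd F) (n : ℕ) :
    rem h (F ^ n) = (rem h F) ^ n := by
  induction n with
  | zero => simpa using rem_one hY hB hρ0 hρ1 hh0
  | succ n ih =>
    rw [pow_succ, rem_mul hY hB hρ0 hρ1 hh0 (hF.pow n) hF, ih, pow_succ]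

theorem rem_prod {ι : Type*} (S : Finset ι) (F : ι → MvPowerSeries (Fin 2) K)
    (hF : ∀ i ∈ S, Bdd (F i)) :
    rem h (∏ i ∈ S, F i) = ∏ i ∈ S, rem h (F i) := by
  classical
  induction S using Finset.cons_induction with
  | empty => simpa using rem_one hY hB hρ0 hρ1 hh0
  | cons j s hj ih =>
    rw [Finset.prod_cons, Finset.prod_cons,
      rem_mul hY hB hρ0 hρ1 hh0 (hF j (Finset.mem_cons_self j s))
        (Bdd.prod fun i hi => hF i (Finset.mem_cons_of_mem hi)),
      ih fun i hi => hF i (Finset.mem_cons_of_mem hi)]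

end Division

section Arith

variable {p : ℕ} [Fact p.Prime]

/-- The binomial coefficients of `m ∈ ℤ_p` are `p`-adically integral. -/
lemma binomCoeff_norm_le (m : ℤ_[p]) (i : ℕ) : ‖binomCoeff m i‖ ≤ 1 := by
  have hfactne : ((i.factorial : ℚ_[p])) ≠ 0 := by
    exact_mod_cast (Nat.cast_ne_zero (R := ℚ_[p])).mpr i.factorial_ne_zero
  have hfactpos : 0 < ‖((i.factorial : ℕ) : ℚ_[p])‖ := norm_pos_iff.mpr hfactne
  have key : ∀ m : ℤ_[p],
      ‖∏ j ∈ Finset.range i, ((m : ℚ_[p]) - (j : ℚ_[p]))‖ ≤ ‖((i.factorial : ℕ) : ℚ_[p])‖ := by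
    have hcont : Continuous fun m : ℤ_[p] =>
        ∏ j ∈ Finset.range i, ((m : ℚ_[p]) - (j : ℚ_[p])) := by
      refine continuous_finset_prod _ fun j _ => ?_
      exact (continuous_subtype_val.sub continuous_const)
    intro m
    have hclosed : IsClosed {x : ℤ_[p] |
        ‖∏ j ∈ Finset.range i, ((x : ℚ_[p]) - (j : ℚ_[p]))‖ ≤ ‖((i.factorial : ℕ) : ℚ_[p])‖} :=
      isClosed_le hcont.norm continuous_const
    have hnat : ∀ n : ℕ,
        ‖∏ j ∈ Finset.range i, (((n : ℤ_[p]) : ℚ_[p]) - (j : ℚ_[p]))‖ ≤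
          ‖((i.factorial : ℕ) : ℚ_[p])‖ := by
      intro n
      by_cases hni : n < i
      · rw [Finset.prod_eq_zero (Finset.mem_range.mpr hni)]
        · rw [norm_zero]
          exact norm_nonneg _
        · push_cast
          ring
      · push_neg at hni
        have hprod : (∏ j ∈ Finset.range i, (((n : ℤ_[p]) : ℚ_[p]) - (j : ℚ_[p]))) =
            ((n.descFactorial i : ℕ) : ℚ_[p]) := by
          rw [Nat.descFactorial_eq_prod_range, Nat.cast_prod]
          refine Finset.prod_congr rfl fun j hj => ?_
          rw [Finset.mem_range] at hj
          have hjn : j ≤ n := le_trans (le_of_lt hj) hni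
          push_cast [Nat.cast_sub hjn]
          ring
        rw [hprod, Nat.descFactorial_eq_factorial_mul_choose, Nat.cast_mul, norm_mul]
        calc ‖((i.factorial : ℕ) : ℚ_[p])‖ * ‖((n.choose i : ℕ) : ℚ_[p])‖ ≤
            ‖((i.factorial : ℕ) : ℚ_[p])‖ * 1 := by
              refine mul_le_mul_of_nonneg_left ?_ (norm_nonneg _)
              have := Padic.norm_int_le_one (p := p) (n.choose i : ℤ)
              simpa using this
        _ = ‖((i.factorial : ℕ) : ℚ_[p])‖ := mul_one _
    have hsub : Set.range ((Nat.cast) : ℕ → ℤ_[p]) ⊆ {x : ℤ_[p] |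
        ‖∏ j ∈ Finset.range i, ((x : ℚ_[p]) - (j : ℚ_[p]))‖ ≤ ‖((i.factorial : ℕ) : ℚ_[p])‖} := by
      rintro _ ⟨n, rfl⟩
      exact hnat n
    have hdense := PadicInt.denseRange_natCast (p := p)
    have hcl : m ∈ closure (Set.range ((Nat.cast) : ℕ → ℤ_[p])) := by
      rw [hdense.closure_eq]
      trivial
    exact closure_minimal hsub hclosed hcl
  rw [binomCoeff, norm_div, div_le_one hfactpos]
  exact key m

end Arith

section RootsOfUnity

variable {K : Type*} [NormedField K] [IsUltrametricDist K]

lemma norm_eq_one_of_root {x : K} {n : ℕ} (hn : 0 < n) (hx : x ^ n = 1) : ‖x‖ = 1 := by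
  have h1 : ‖x‖ ^ n = 1 := by
    rw [← norm_pow, hx, norm_one]
  rcases lt_trichotomy ‖x‖ 1 with h | h | h
  · exfalso
    have := pow_lt_one₀ (norm_nonneg x) h hn.ne'
    rw [h1] at this
    exact lt_irrefl 1 this
  · exact h
  · exfalso
    have := one_lt_pow₀ h hn.ne'
    rw [h1] at this
    exact lt_irrefl 1 this

/-- Auxiliary: if all middle binomial coefficients are small, a root of unity is ≡ 1. -/
lemma norm_sub_one_lt_aux (x : K) (n : ℕ) (hn0 : 0 < n) (hx : x ^ n = 1) (ε : ℝ)
    (hε0 : 0 ≤ ε) (hε1 : ε < 1) (hch : ∀ i, 0 < i → i < n → ‖(n.choose i : K)‖ ≤ ε) :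
    ‖x - 1‖ < 1 := by
  obtain ⟨n', rfl⟩ : ∃ n', n = n' + 1 := ⟨n - 1, by omega⟩
  have hxnorm : ‖x‖ = 1 := norm_eq_one_of_root hn0 hx
  by_contra hcon
  push_neg at hcon
  have htle : ‖x - 1‖ ≤ 1 := by
    refine (unorm_sub_le_max x 1).trans ?_
    rw [hxnorm, norm_one, max_self]
  have htone : ‖x - 1‖ = 1 := le_antisymm htle hcon
  set t := x - 1 with ht
  have hxt : x = t + 1 := by rw [ht]; ring
  have hexp : (∑ i ∈ Finset.range (n' + 1 + 1),
      t ^ i * (1 : K) ^ (n' + 1 - i) * ((n' + 1).choose i : K)) = 1 := by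
    rw [← add_pow, ← hxt, hx]
  have hexp2 : (∑ i ∈ Finset.range (n' + 1), t ^ (i + 1) * ((n' + 1).choose (i + 1) : K)) = 0 := by
    rw [Finset.sum_range_succ'
      (fun i => t ^ i * (1 : K) ^ (n' + 1 - i) * ((n' + 1).choose i : K)) (n' + 1)] at hexp
    simp only [pow_zero, one_pow, one_mul, mul_one, Nat.choose_zero_right, Nat.cast_one] at hexp
    linear_combination hexp
  rw [Finset.sum_range_succ] at hexp2
  have hch1 : (((n' + 1).choose (n' + 1) : ℕ) : K) = 1 := by
    rw [Nat.choose_self, Nat.cast_one]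
  rw [hch1, mul_one] at hexp2
  have hsplit : t ^ (n' + 1) = -∑ i ∈ Finset.range n', t ^ (i + 1) * ((n' + 1).choose (i + 1) : K) := by
    linear_combination hexp2
  have hnorm_small : ‖t ^ (n' + 1)‖ ≤ ε := by
    rw [hsplit, norm_neg]
    refine norm_sum_le_of_forall_le_of_nonneg hε0 fun i hi => ?_
    rw [Finset.mem_range] at hi
    rw [norm_mul, norm_pow, htone, one_pow, one_mul]
    exact hch (i + 1) (by omega) (by omega)
  have hcontr : (1 : ℝ) ≤ ε := by
    calc (1 : ℝ) = ‖t‖ ^ (n' + 1) := by rw [htone, one_pow]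
    _ = ‖t ^ (n' + 1)‖ := (norm_pow t (n' + 1)).symm
    _ ≤ ε := hnorm_small
  linarith

variable {p : ℕ} [Fact p.Prime] [Algebra ℚ_[p] K]

/-- `p`-power roots of unity are congruent to 1 mod the maximal ideal. -/
lemma norm_root_sub_one_lt (hiso : ∀ a : ℚ_[p], ‖algebraMap ℚ_[p] K a‖ = ‖a‖)
    {x : K} {k : ℕ} (hx : x ^ p ^ k = 1) : ‖x - 1‖ < 1 := by
  have hp : (2 : ℕ) ≤ p := (Fact.out : p.Prime).two_le
  have hppos : (0 : ℝ) < (p : ℝ) := by exact_mod_cast by omega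
  refine norm_sub_one_lt_aux x (p ^ k) (pow_pos (by omega) k) hx ((p : ℝ)⁻¹)
    (by positivity) ?_ ?_
  · rw [inv_lt_one_iff₀]
    right
    exact_mod_cast by omega
  · intro i hi0 hin
    have hdvd : (p : ℤ) ∣ ((p ^ k).choose i : ℤ) := by
      exact_mod_cast (Fact.out : p.Prime).dvd_choose_pow (by omega) (by omega)
    have hcast : (((p ^ k).choose i : ℕ) : K) =
        algebraMap ℚ_[p] K (((p ^ k).choose i : ℕ) : ℚ_[p]) := by
      rw [map_natCast]
    rw [hcast, hiso]
    have hle := (Padic.norm_int_le_pow_iff_dvd (((p ^ k).choose i : ℕ) : ℤ) 1).mpr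
      (by simpa using hdvd)
    calc ‖(((p ^ k).choose i : ℕ) : ℚ_[p])‖ = ‖((((p ^ k).choose i : ℕ) : ℤ) : ℚ_[p])‖ := by
          norm_cast
    _ ≤ (p : ℝ) ^ (-(1 : ℤ)) := hle
    _ = (p : ℝ)⁻¹ := by rw [zpow_neg, zpow_one]

end RootsOfUnity

section Fractions

variable {K : Type*} [Field K]

/-- The fraction field of a subring `O`, as a subfield of `K`. -/
def Lsub (O : Subring K) : Subfield K where
  carrier := {x | ∃ a ∈ O, ∃ b ∈ O, b ≠ 0 ∧ x = a / b}
  mul_mem' := by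
    rintro x y ⟨a, ha, b, hb, hbne, rfl⟩ ⟨c, hc, d, hd, hdne, rfl⟩
    exact ⟨a * c, mul_mem ha hc, b * d, mul_mem hb hd, mul_ne_zero hbne hdne,
      by rw [div_mul_div_comm]⟩
  one_mem' := ⟨1, one_mem O, 1, one_mem O, one_ne_zero, by rw [div_one]⟩
  add_mem' := by
    rintro x y ⟨a, ha, b, hb, hbne, rfl⟩ ⟨c, hc, d, hd, hdne, rfl⟩
    exact ⟨a * d + b * c, add_mem (mul_mem ha hd) (mul_mem hb hc), b * d,
      mul_mem hb hd, mul_ne_zero hbne hdne, (div_add_div a c hbne hdne)⟩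
  zero_mem' := ⟨0, zero_mem O, 1, one_mem O, one_ne_zero, by rw [zero_div]⟩
  neg_mem' := by
    rintro x ⟨a, ha, b, hb, hbne, rfl⟩
    exact ⟨-a, neg_mem ha, b, hb, hbne, by rw [neg_div]⟩
  inv_mem' := by
    rintro x ⟨a, ha, b, hb, hbne, rfl⟩
    by_cases hane : a = 0
    · subst hane
      exact ⟨0, zero_mem O, 1, one_mem O, one_ne_zero, by rw [zero_div, zero_div, inv_zero]⟩
    · exact ⟨b, hb, a, ha, hane, inv_div a b⟩

lemma mem_Lsub_of_mem {O : Subring K} {x : K} (hx : x ∈ O) : x ∈ Lsub O :=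
  ⟨x, hx, 1, one_mem O, one_ne_zero, by rw [div_one]⟩

end Fractions

section DivClosed

variable {K : Type*} [NormedField K] [IsUltrametricDist K]

/-- A subfield's power series are division-closed inside `K[[X,Y]]`. -/
theorem div_closed (L : Subfield K) {A B Cs : MvPowerSeries (Fin 2) K}
    (hA : ∀ t b, cf A t b ∈ L) (hB : ∀ t b, cf B t b ∈ L) (hBne : B ≠ 0)
    (heqn : A = B * Cs) : ∀ t b, cf Cs t b ∈ L := by
  classical
  set r : ℕ × ℕ → ℕ × ℕ → Prop := Prod.Lex (· < ·) (· < ·) with hr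
  have wf : WellFounded r := WellFounded.prod_lex (wellFounded_lt) (wellFounded_lt)
  set S : Set (ℕ × ℕ) := {q | cf B q.1 q.2 ≠ 0} with hS
  have hne : S.Nonempty := by
    by_contra hemp
    rw [Set.not_nonempty_iff_eq_empty] at hemp
    apply hBne
    apply mv_ext
    intro t b
    rw [cf_zero]
    by_contra hc
    have : (t, b) ∈ S := hc
    rw [hemp] at this
    exact this
  set d0 : ℕ × ℕ := wf.min S hne with hd0def
  have hd0 : cf B d0.1 d0.2 ≠ 0 := wf.min_mem S hne
  have hmin : ∀ q : ℕ × ℕ, r q d0 → cf B q.1 q.2 = 0 := by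
    intro q hq
    by_contra hc
    exact wf.not_lt_min S hc hq
  have main : ∀ v : ℕ × ℕ, cf Cs v.1 v.2 ∈ L := by
    intro v
    refine wf.induction (C := fun w => cf Cs w.1 w.2 ∈ L) v ?_
    intro v IH
    -- the coefficient equation at d0 + v
    have hconv : cf A (d0.1 + v.1) (d0.2 + v.2) =
        ∑ z ∈ antidiagonal (d0.1 + v.1) ×ˢ antidiagonal (d0.2 + v.2),
          cf B z.1.1 z.2.1 * cf Cs z.1.2 z.2.2 := by
      rw [heqn, cf_mul, ← Finset.sum_product']
    set z0 : (ℕ × ℕ) × (ℕ × ℕ) := ((d0.1, v.1), (d0.2, v.2)) with hz0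
    have hz0mem : z0 ∈ antidiagonal (d0.1 + v.1) ×ˢ antidiagonal (d0.2 + v.2) := by
      rw [Finset.mem_product]
      constructor <;> rw [Finset.HasAntidiagonal.mem_antidiagonal]
    have hsplitsum := (Finset.add_sum_erase _ (fun z : (ℕ × ℕ) × (ℕ × ℕ) =>
      cf B z.1.1 z.2.1 * cf Cs z.1.2 z.2.2) hz0mem).symm
    set rest := ∑ z ∈ (antidiagonal (d0.1 + v.1) ×ˢ antidiagonal (d0.2 + v.2)).erase z0,
      cf B z.1.1 z.2.1 * cf Cs z.1.2 z.2.2 with hrest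
    have hE : cf A (d0.1 + v.1) (d0.2 + v.2) = cf B d0.1 d0.2 * cf Cs v.1 v.2 + rest := by
      rw [hconv, hsplitsum]
    have hrestL : rest ∈ L := by
      rw [hrest]
      refine Subfield.sum_mem L fun z hz => ?_
      rw [Finset.mem_erase, Finset.mem_product, Finset.HasAntidiagonal.mem_antidiagonal,
        Finset.HasAntidiagonal.mem_antidiagonal] at hz
      obtain ⟨hzne, hz1, hz2⟩ := hz
      rcases lt_trichotomy z.1.1 d0.1 with hx | hx | hx
      · rw [hmin (z.1.1, z.2.1) (Prod.Lex.left _ _ hx), zero_mul]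
        exact zero_mem L
      · rcases lt_trichotomy z.2.1 d0.2 with hy | hy | hy
        · rw [hmin (z.1.1, z.2.1) (by rw [hx]; exact Prod.Lex.right _ hy), zero_mul]
          exact zero_mem L
        · exfalso
          apply hzne
          have h1 : z.1.2 = v.1 := by omega
          have h2 : z.2.2 = v.2 := by omega
          have hzz : z = ((z.1.1, z.1.2), (z.2.1, z.2.2)) := rfl
          rw [hzz, hz0, hx, hy, h1, h2]
        · have h1 : z.1.2 = v.1 := by omega
          have h2 : z.2.2 < v.2 := by omega
          refine mul_mem (hB _ _) ?_
          have := IH (z.1.2, z.2.2) (by rw [h1]; exact Prod.Lex.right _ h2)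
          exact this
      · have h1 : z.1.2 < v.1 := by omega
        refine mul_mem (hB _ _) ?_
        exact IH (z.1.2, z.2.2) (Prod.Lex.left _ _ h1)
    have hsolve : cf Cs v.1 v.2 =
        (cf A (d0.1 + v.1) (d0.2 + v.2) - rest) * (cf B d0.1 d0.2)⁻¹ := by
      rw [hE, add_sub_cancel_right, mul_comm, inv_mul_cancel_left₀ hd0]
    rw [hsolve]
    exact mul_mem (sub_mem (hA _ _) hrestL) (Subfield.inv_mem L (hB _ _))
  intro t b
  exact main (t, b)

end DivClosed

end S17

/-- Let `g ≥ 1`, `ξ` a (`p`-power) root of unity whose `g`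
distinct conjugates over `F` are `ξs 0, …, ξs (g-1)` (so that `F[ξ]/F` is Galois of
degree `g`), `m ∈ ℤ_p`, and `φ ∈ O_F[[X,Y]]` irreducible with `φ(0,0) = 0`.  If
`φ(X,Y)^g = (∏_σ ((X+1)^m - σ(ξ)(Y+1))) · Θ(X,Y)` for some `Θ ∈ O_F[[X,Y]]`, then
`ξ = 1`, `g = 1`, and `φ` is a unit multiple of `(X+1)^m - (Y+1)`. -/
theorem galois_norm_factorization_forces_trivial_translate
    {p : ℕ} [Fact p.Prime]
    {K : Type*} [NormedField K] [IsUltrametricDist K] [CompleteSpace K]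
    [Algebra ℚ_[p] K] (hiso : ∀ a : ℚ_[p], ‖algebraMap ℚ_[p] K a‖ = ‖a‖)
    (O : Subring K) (hO : ∀ x ∈ O, ‖x‖ ≤ 1)
    (hval : ∀ x y : K, x ∈ O → y ∈ O → y ≠ 0 → ‖x‖ ≤ ‖y‖ → x / y ∈ O)
    (π : K) (hπO : π ∈ O) (hπ0 : 0 < ‖π‖) (hπ1 : ‖π‖ < 1)
    (hunif : ∀ x ∈ O, ‖x‖ < 1 → ‖x‖ ≤ ‖π‖)
    (g : ℕ) (hg : 0 < g)
    (ξ : K) (hξroot : ∃ k : ℕ, ξ ^ p ^ k = 1)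
    (m : ℤ_[p])
    (φ : MvPowerSeries (Fin 2) O)
    (hirr : Irreducible φ)
    (h00 : MvPowerSeries.constantCoeff φ = 0)
    (ξs : Fin g → K) (hξsinj : Function.Injective ξs) (hξ0 : ∃ j, ξs j = ξ)
    (hconj : ∀ j, ∃ σ : K ≃+* K, (∀ x ∈ O, σ x = x) ∧ σ ξ = ξs j)
    (Θ : MvPowerSeries (Fin 2) O)
    (heq : MvPowerSeries.map O.subtype (φ ^ g) =
      (∏ j, (binomX m - (MvPowerSeries.C (ξs j) : MvPowerSeries (Fin 2) K) * yPlusOne)) *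
        MvPowerSeries.map O.subtype Θ) :
    ξ = 1 ∧ g = 1 ∧
      ∃ u : (MvPowerSeries (Fin 2) O)ˣ,
        MvPowerSeries.map O.subtype φ =
          (binomX m - yPlusOne) *
            MvPowerSeries.map O.subtype (↑u : MvPowerSeries (Fin 2) O) := by
  classical
  set φ' : MvPowerSeries (Fin 2) K := MvPowerSeries.map O.subtype φ with hφ'def
  set Θ' : MvPowerSeries (Fin 2) K := MvPowerSeries.map O.subtype Θ with hΘ'def
  set L : Subfield K := S17.Lsub O with hLdef
  -- basic facts on mapped series
  have hcfmap : ∀ (F : MvPowerSeries (Fin 2) O) t b,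
      S17.cf (MvPowerSeries.map O.subtype F) t b =
        ((MvPowerSeries.coeff (S17.e t b) F : O) : K) := by
    intro F t b
    rw [S17.cf, MvPowerSeries.coeff_map]
    rfl
  have hbddmap : ∀ F : MvPowerSeries (Fin 2) O,
      S17.Bdd (MvPowerSeries.map O.subtype F) := by
    intro F t b
    rw [hcfmap]
    exact hO _ (SetLike.coe_mem _)
  have hLmap : ∀ (F : MvPowerSeries (Fin 2) O) t b,
      S17.cf (MvPowerSeries.map O.subtype F) t b ∈ L := by
    intro F t b
    rw [hcfmap]
    exact S17.mem_Lsub_of_mem (SetLike.coe_mem _)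
  have hmapinj : Function.Injective (MvPowerSeries.map (σ := Fin 2) O.subtype) := by
    intro F1 F2 h12
    ext d
    have h13 := congrArg (MvPowerSeries.coeff d) h12
    rw [MvPowerSeries.coeff_map, MvPowerSeries.coeff_map] at h13
    exact h13
  -- roots of unity facts
  obtain ⟨k, hk⟩ := hξroot
  have hppos : 0 < p := (Fact.out : p.Prime).pos
  have hξs_pow : ∀ j, (ξs j) ^ p ^ k = 1 := by
    intro j
    obtain ⟨σ, hσO, hσξ⟩ := hconj j
    rw [← hσξ, ← map_pow, hk, map_one]
  have hξs_norm : ∀ j, ‖ξs j‖ = 1 :=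
    fun j => S17.norm_eq_one_of_root (pow_pos hppos k) (hξs_pow j)
  have hξs_ne : ∀ j, ξs j ≠ 0 := by
    intro j h0
    have hn := hξs_norm j
    rw [h0, norm_zero] at hn
    norm_num at hn
  have hξs_sub : ∀ j, ‖ξs j - 1‖ < 1 := fun j => S17.norm_root_sub_one_lt hiso (hξs_pow j)
  -- the series bin, Yv, hj
  set bin : MvPowerSeries (Fin 2) K := binomX m with hbindef
  have hbin_cf : ∀ t b, S17.cf bin t b =
      if b = 0 then algebraMap ℚ_[p] K (binomCoeff m t) else 0 := by
    intro t b
    rw [S17.cf_def]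
    show (if S17.e t b 1 = 0 then algebraMap ℚ_[p] K (binomCoeff m (S17.e t b 0)) else 0) = _
    rw [S17.e_apply0, S17.e_apply1]
  have hbin_bdd : S17.Bdd bin := by
    intro t b
    rw [hbin_cf]
    split
    · rw [hiso]
      exact S17.binomCoeff_norm_le m t
    · simp
  have hbin_yfree : S17.Yfree bin := by
    intro t b hb
    rw [hbin_cf, if_neg hb]
  have hbin00 : S17.cf bin 0 0 = 1 := by
    rw [hbin_cf, if_pos rfl]
    have : binomCoeff m 0 = 1 := by
      rw [binomCoeff]
      simp
    rw [this, map_one]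
  have hbin_ne : bin ≠ 0 := by
    intro h0
    have := hbin00
    rw [h0, S17.cf_zero] at this
    exact zero_ne_one this
  set Yv : MvPowerSeries (Fin 2) K := MvPowerSeries.X 1 with hYvdef
  have hyPeq : (yPlusOne : MvPowerSeries (Fin 2) K) = Yv + 1 := rfl
  set hj : Fin g → MvPowerSeries (Fin 2) K :=
    fun j => MvPowerSeries.C (σ := Fin 2) (R := K) (ξs j)⁻¹ * bin - 1 with hhjdef
  have hhj_yfree : ∀ j, S17.Yfree (hj j) :=
    fun j => ((S17.yfree_C _).mul hbin_yfree).sub S17.yfree_one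
  have hhj_bdd : ∀ j, S17.Bdd (hj j) := by
    intro j
    refine ((S17.bdd_C ?_).mul hbin_bdd).sub S17.bdd_one
    rw [norm_inv, hξs_norm, inv_one]
  have hhj00 : ∀ j, S17.cf (hj j) 0 0 = (ξs j)⁻¹ - 1 := by
    intro j
    rw [hhjdef]
    simp only
    rw [S17.cf_sub, S17.cf_C_mul, hbin00, mul_one, S17.cf_one, if_pos ⟨rfl, rfl⟩]
  have hhj00small : ∀ j, ‖S17.cf (hj j) 0 0‖ < 1 := by
    intro j
    rw [hhj00]
    have hrw : (ξs j)⁻¹ - 1 = -((ξs j - 1) * (ξs j)⁻¹) := by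
      have h1 : (ξs j - 1) * (ξs j)⁻¹ = 1 - (ξs j)⁻¹ := by
        rw [sub_mul, mul_inv_cancel₀ (hξs_ne j), one_mul]
      rw [h1]
      ring
    rw [hrw, norm_neg, norm_mul, norm_inv, hξs_norm, inv_one, mul_one]
    exact hξs_sub j
  set ρ : Fin g → ℝ := fun j => max ‖S17.cf (hj j) 0 0‖ (1/2) with hρdef
  have hρ0 : ∀ j, 0 < ρ j := fun j => lt_of_lt_of_le (by norm_num) (le_max_right _ _)
  have hρ1 : ∀ j, ρ j < 1 := fun j => max_lt (hhj00small j) (by norm_num)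
  have hρh : ∀ j, ‖S17.cf (hj j) 0 0‖ ≤ ρ j := fun j => le_max_left _ _
  have hYh_bdd : ∀ j, S17.Bdd (Yv - hj j) := fun j => S17.bdd_X1.sub (hhj_bdd j)
  -- relation between factors and (Yv - hj)
  have hCCinv : ∀ j, MvPowerSeries.C (σ := Fin 2) (R := K) (ξs j) * MvPowerSeries.C (σ := Fin 2) (R := K) (ξs j)⁻¹ =
      1 := by
    intro j
    rw [← map_mul, mul_inv_cancel₀ (hξs_ne j), map_one]
  have hfj_eq : ∀ j, binomX m - MvPowerSeries.C (σ := Fin 2) (R := K) (ξs j) * yPlusOne =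
      (Yv - hj j) * (-(MvPowerSeries.C (σ := Fin 2) (R := K) (ξs j))) := by
    intro j
    rw [hyPeq, hhjdef]
    simp only
    rw [← hbindef]
    linear_combination (-bin) * hCCinv j
  have hfj_bdd : ∀ j, S17.Bdd (binomX m - MvPowerSeries.C (σ := Fin 2) (R := K) (ξs j) * yPlusOne) := by
    intro j
    rw [hfj_eq j]
    exact (hYh_bdd j).mul (S17.Bdd.neg (S17.bdd_C (le_of_eq (hξs_norm j))))
  -- heq in power form
  have heqpow : φ' ^ g =
      (∏ j, (binomX m - MvPowerSeries.C (σ := Fin 2) (R := K) (ξs j) * yPlusOne)) * Θ' := by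
    rw [hφ'def, ← map_pow]
    exact heq
  -- nonvanishing
  have hφne : φ ≠ 0 := hirr.ne_zero
  have hφ'ne : φ' ≠ 0 := by
    intro h0
    apply hφne
    apply hmapinj
    rw [map_zero, ← hφ'def, h0]
  have hΘ'ne : Θ' ≠ 0 := by
    intro h0
    rw [h0, mul_zero] at heqpow
    exact pow_ne_zero g hφ'ne heqpow
  -- rem of φ' vanishes for each j
  have hremφ : ∀ j, S17.rem (hj j) φ' = 0 := by
    intro j
    have h0 := congrArg (S17.rem (hj j)) heqpow
    rw [S17.rem_pow (hhj_yfree j) (hhj_bdd j) (hρ0 j) (hρ1 j) (hρh j) (hbddmap φ) g] at h0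
    rw [S17.rem_mul (hhj_yfree j) (hhj_bdd j) (hρ0 j) (hρ1 j) (hρh j)
      (S17.Bdd.prod fun i _ => hfj_bdd i) (hbddmap Θ)] at h0
    rw [S17.rem_prod (hhj_yfree j) (hhj_bdd j) (hρ0 j) (hρ1 j) (hρh j) Finset.univ _
      (fun i _ => hfj_bdd i)] at h0
    have hzero : S17.rem (hj j) (binomX m - MvPowerSeries.C (σ := Fin 2) (R := K) (ξs j) * yPlusOne) = 0 := by
      rw [hfj_eq j]
      exact S17.rem_of_mul_self (hhj_yfree j) (hhj_bdd j) (hρ0 j) (hρ1 j) (hρh j)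
        (S17.Bdd.neg (S17.bdd_C (le_of_eq (hξs_norm j))))
    rw [Finset.prod_eq_zero (Finset.mem_univ j) hzero, zero_mul] at h0
    exact (pow_eq_zero_iff hg.ne').mp h0
  -- the chain: φ' is divisible by the product of the (Yv - hj j)
  have hchain : ∀ S : Finset (Fin g), ∃ q, S17.Bdd q ∧ φ' = (∏ j ∈ S, (Yv - hj j)) * q := by
    intro S
    induction S using Finset.cons_induction with
    | empty => exact ⟨φ', hbddmap φ, by simp⟩
    | cons j0 S hj0S ih =>
      obtain ⟨q, hq, hphi⟩ := ih
      have h1 := hremφ j0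
      rw [hphi] at h1
      rw [S17.rem_mul (hhj_yfree j0) (hhj_bdd j0) (hρ0 j0) (hρ1 j0) (hρh j0)
        (S17.Bdd.prod fun i _ => hYh_bdd i) hq] at h1
      rw [S17.rem_prod (hhj_yfree j0) (hhj_bdd j0) (hρ0 j0) (hρ1 j0) (hρh j0) S _
        (fun i _ => hYh_bdd i)] at h1
      have hremY : ∀ i ∈ S, S17.rem (hj j0) (Yv - hj i) = hj j0 - hj i := by
        intro i hi
        have hsplit : Yv - hj i = (Yv - hj j0) * 1 + (hj j0 - hj i) := by ring
        rw [hsplit,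
          S17.rem_add (hhj_yfree j0) (hhj_bdd j0) (hρ0 j0) (hρ1 j0) (hρh j0)
            ((S17.bdd_X1.sub (hhj_bdd j0)).mul S17.bdd_one) ((hhj_bdd j0).sub (hhj_bdd i)),
          S17.rem_of_mul_self (hhj_yfree j0) (hhj_bdd j0) (hρ0 j0) (hρ1 j0) (hρh j0)
            S17.bdd_one,
          S17.rem_of_yfree (hhj_yfree j0) (hhj_bdd j0) (hρ0 j0) (hρ1 j0) (hρh j0)
            ((hhj_yfree j0).sub (hhj_yfree i)), zero_add]
      rw [Finset.prod_congr rfl hremY] at h1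
      have hne : ∀ i ∈ S, hj j0 - hj i ≠ 0 := by
        intro i hi
        have hdiff : hj j0 - hj i =
            MvPowerSeries.C (σ := Fin 2) (R := K) ((ξs j0)⁻¹ - (ξs i)⁻¹) * bin := by
          rw [hhjdef]
          simp only
          rw [map_sub]
          ring
        rw [hdiff]
        refine mul_ne_zero ?_ hbin_ne
        intro hC0
        have hc00 : (ξs j0)⁻¹ - (ξs i)⁻¹ = 0 := by
          have h2 := congrArg (fun F => S17.cf F 0 0) hC0
          simp only [S17.cf_zero] at h2
          rwa [S17.cf_C, if_pos ⟨rfl, rfl⟩] at h2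
        have hinveq : (ξs j0)⁻¹ = (ξs i)⁻¹ := sub_eq_zero.mp hc00
        have hij : ξs j0 = ξs i := inv_injective hinveq
        have : j0 = i := hξsinj hij
        exact hj0S (this ▸ hi)
      have hprodne : (∏ i ∈ S, (hj j0 - hj i)) ≠ 0 := Finset.prod_ne_zero_iff.mpr hne
      have hq0 : S17.rem (hj j0) q = 0 := by
        rcases mul_eq_zero.mp h1 with h | h
        · exact absurd h hprodne
        · exact h
      have hdiv := S17.div_ex (hhj_yfree j0) (hhj_bdd j0) (hρ0 j0) (hρ1 j0) (hρh j0) hq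
      rw [hq0, add_zero, ← hYvdef] at hdiv
      refine ⟨S17.qdiv (hj j0) q, S17.qdiv_bdd (hhj_bdd j0) hq, ?_⟩
      rw [Finset.prod_cons, hphi]
      conv_lhs => rw [hdiv]
      ring
  obtain ⟨ψ, hψbdd, hPψ⟩ := hchain Finset.univ
  -- the series G
  set G : MvPowerSeries (Fin 2) K :=
    ∏ j, (MvPowerSeries.C (σ := Fin 2) (R := K) (ξs j) * (Yv - hj j)) with hGdef
  have hGP : G = (∏ j, MvPowerSeries.C (σ := Fin 2) (R := K) (ξs j)) * ∏ j, (Yv - hj j) := by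
    rw [hGdef, ← Finset.prod_mul_distrib]
  have hprodfj : (∏ j, (binomX m - MvPowerSeries.C (σ := Fin 2) (R := K) (ξs j) * yPlusOne)) =
      (-1 : MvPowerSeries (Fin 2) K) ^ g * G := by
    have hterm : ∀ j, binomX m - MvPowerSeries.C (σ := Fin 2) (R := K) (ξs j) * yPlusOne =
        (-1) * (MvPowerSeries.C (σ := Fin 2) (R := K) (ξs j) * (Yv - hj j)) := by
      intro j
      rw [hfj_eq j]
      ring
    rw [Finset.prod_congr rfl fun j _ => hterm j, Finset.prod_mul_distrib,
      Finset.prod_const, Finset.card_univ, Fintype.card_fin, hGdef]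
  have heqKey : φ' ^ g = ((-1 : MvPowerSeries (Fin 2) K) ^ g * G) * Θ' := by
    rw [heqpow, hprodfj]
  have hGne : G ≠ 0 := by
    intro h0
    rw [h0, mul_zero, zero_mul] at heqKey
    exact pow_ne_zero g hφ'ne heqKey
  -- L-rationality of G
  have hφ'gL : ∀ t b, S17.cf (φ' ^ g) t b ∈ L := by
    intro t b
    have : φ' ^ g = MvPowerSeries.map O.subtype (φ ^ g) := by
      rw [hφ'def, map_pow]
    rw [this]
    exact hLmap _ t b
  have hmGL := S17.div_closed L (Cs := (-1 : MvPowerSeries (Fin 2) K) ^ g * G)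
    hφ'gL (fun t b => hLmap Θ t b) hΘ'ne (by rw [heqKey]; ring)
  have hGL : ∀ t b, S17.cf G t b ∈ L := by
    intro t b
    have h1 := hmGL t b
    have hCne : ((-1 : MvPowerSeries (Fin 2) K)) ^ g =
        MvPowerSeries.C (σ := Fin 2) (R := K) ((-1 : K) ^ g) := by
      rw [map_pow, map_neg, map_one]
    have h2 : S17.cf G t b = (-1 : K) ^ g * S17.cf ((-1 : MvPowerSeries (Fin 2) K) ^ g * G) t b := by
      rw [hCne, S17.cf_C_mul, ← mul_assoc, ← mul_pow, neg_mul_neg, one_mul, one_pow, one_mul]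
    rw [h2]
    exact mul_mem (pow_mem (neg_mem (one_mem L)) g) h1
  -- ψ0 and the factorization φ' = G * ψ0
  set ψ0 : MvPowerSeries (Fin 2) K := (∏ j, MvPowerSeries.C (σ := Fin 2) (R := K) (ξs j)⁻¹) * ψ with hψ0def
  have hGψ : φ' = G * ψ0 := by
    have hone : (∏ j, MvPowerSeries.C (σ := Fin 2) (R := K) (ξs j)) *
        (∏ j, MvPowerSeries.C (σ := Fin 2) (R := K) (ξs j)⁻¹) = 1 := by
      rw [← Finset.prod_mul_distrib,
        Finset.prod_congr rfl fun j _ => hCCinv j, Finset.prod_const_one]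
    calc φ' = (∏ j, (Yv - hj j)) * ψ := hPψ
    _ = ((∏ j, MvPowerSeries.C (σ := Fin 2) (R := K) (ξs j)) * (∏ j, MvPowerSeries.C (σ := Fin 2) (R := K) (ξs j)⁻¹)) *
        ((∏ j, (Yv - hj j)) * ψ) := by rw [hone, one_mul]
    _ = G * ψ0 := by rw [hGP, hψ0def]; ring
  have hψ0L := S17.div_closed L (fun t b => hLmap φ t b) hGL hGne hGψ
  have hψ0bdd : S17.Bdd ψ0 := by
    intro t b
    have hCprod : (∏ j, MvPowerSeries.C (σ := Fin 2) (R := K) (ξs j)⁻¹) =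
        MvPowerSeries.C (σ := Fin 2) (R := K) (∏ j, (ξs j)⁻¹) := by
      rw [map_prod]
    have h1 : S17.cf ψ0 t b = (∏ j, (ξs j)⁻¹) * S17.cf ψ t b := by
      rw [hψ0def, hCprod, S17.cf_C_mul]
    rw [h1, norm_mul]
    have h2 : ‖∏ j, (ξs j)⁻¹‖ = 1 := by
      rw [norm_prod]
      refine Finset.prod_eq_one fun j _ => ?_
      rw [norm_inv, hξs_norm, inv_one]
    rw [h2, one_mul]
    exact hψbdd t b
  have hGbdd : S17.Bdd G :=
    S17.Bdd.prod fun j _ => (S17.bdd_C (le_of_eq (hξs_norm j))).mul (hYh_bdd j)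
  -- lift to O
  have hmemO : ∀ (F : MvPowerSeries (Fin 2) K), (∀ t b, S17.cf F t b ∈ L) → S17.Bdd F →
      ∀ d : Fin 2 →₀ ℕ, F d ∈ O := by
    intro F hL hb d
    have h1 : F d = S17.cf F (d 0) (d 1) := by rw [S17.cf_def, S17.e_eq]
    rw [h1]
    obtain ⟨a, ha, b2, hb2, hb2ne, hfrac⟩ := hL (d 0) (d 1)
    rw [hfrac]
    refine hval a b2 ha hb2 hb2ne ?_
    have h2 : ‖a / b2‖ ≤ 1 := by
      rw [← hfrac]
      exact hb (d 0) (d 1)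
    rw [norm_div, div_le_one (norm_pos_iff.mpr hb2ne)] at h2
    exact h2
  set G0 : MvPowerSeries (Fin 2) O := fun d => ⟨G d, hmemO G hGL hGbdd d⟩ with hG0def
  set Ψ : MvPowerSeries (Fin 2) O := fun d => ⟨ψ0 d, hmemO ψ0 hψ0L hψ0bdd d⟩ with hΨdef
  have hG0map : MvPowerSeries.map O.subtype G0 = G := by
    ext d
    rw [MvPowerSeries.coeff_map]
    rfl
  have hΨmap : MvPowerSeries.map O.subtype Ψ = ψ0 := by
    ext d
    rw [MvPowerSeries.coeff_map]
    rfl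
  have hfac : φ = G0 * Ψ := by
    apply hmapinj
    rw [map_mul, hG0map, hΨmap, ← hφ'def, hGψ]
  -- constant coefficient of G
  have hG00 : S17.cf G 0 0 = ∏ j, (ξs j - 1) := by
    have hcc : S17.cf G 0 0 = MvPowerSeries.constantCoeff (σ := Fin 2) (R := K) G := by
      rw [S17.cf, S17.e_zero]
      rfl
    rw [hcc, hGdef, map_prod]
    refine Finset.prod_congr rfl fun j _ => ?_
    have hccbin : MvPowerSeries.constantCoeff (σ := Fin 2) (R := K) bin = 1 := by
      have : MvPowerSeries.constantCoeff (σ := Fin 2) (R := K) bin = S17.cf bin 0 0 := by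
        rw [S17.cf, S17.e_zero]
        rfl
      rw [this, hbin00]
    rw [map_mul, map_sub, MvPowerSeries.constantCoeff_C, hYvdef, hhjdef]
    simp only
    rw [map_sub, map_mul, MvPowerSeries.constantCoeff_C, MvPowerSeries.constantCoeff_X,
      hccbin, map_one, mul_one]
    linear_combination -(mul_inv_cancel₀ (hξs_ne j))
  have hG00norm : ‖S17.cf G 0 0‖ < 1 := by
    rw [hG00, norm_prod]
    set j1 : Fin g := ⟨0, hg⟩ with hj1
    calc (∏ j, ‖ξs j - 1‖) = ‖ξs j1 - 1‖ * ∏ j ∈ Finset.univ.erase j1, ‖ξs j - 1‖ :=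
          (Finset.mul_prod_erase Finset.univ _ (Finset.mem_univ j1)).symm
    _ ≤ ‖ξs j1 - 1‖ * 1 := by
          refine mul_le_mul_of_nonneg_left ?_ (norm_nonneg _)
          refine Finset.prod_le_one (fun j _ => norm_nonneg _) (fun j _ => (hξs_sub j).le)
    _ = ‖ξs j1 - 1‖ := mul_one _
    _ < 1 := hξs_sub j1
  -- the irreducibility dichotomy
  have hccG0val : ((MvPowerSeries.constantCoeff (σ := Fin 2) (R := O) G0 : O) : K) = S17.cf G 0 0 := by
    have h1 : MvPowerSeries.constantCoeff (σ := Fin 2) (R := K) G =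
        ((MvPowerSeries.constantCoeff (σ := Fin 2) (R := O) G0 : O) : K) := by
      rw [← hG0map]
      rfl
    rw [← h1, S17.cf, S17.e_zero]
    rfl
  rcases hirr.isUnit_or_isUnit hfac with hu | hu
  · exfalso
    have hcc : IsUnit (MvPowerSeries.constantCoeff (σ := Fin 2) (R := O) G0) :=
      hu.map (MvPowerSeries.constantCoeff (σ := Fin 2) (R := O))
    obtain ⟨z, hz⟩ := isUnit_iff_exists_inv.mp hcc
    have hzval := congrArg (fun x : O => (x : K)) hz
    push_cast at hzval
    have hzn : ‖((z : O) : K)‖ ≤ 1 := hO _ (SetLike.coe_mem _)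
    have h1 : (1 : ℝ) = ‖((MvPowerSeries.constantCoeff (σ := Fin 2) (R := O) G0 : O) : K)‖ * ‖((z : O) : K)‖ := by
      rw [← norm_mul, hzval, norm_one]
    have h2 : ‖((MvPowerSeries.constantCoeff (σ := Fin 2) (R := O) G0 : O) : K)‖ < 1 := by
      rw [hccG0val]
      exact hG00norm
    nlinarith [norm_nonneg ((z : O) : K), norm_nonneg ((MvPowerSeries.constantCoeff (σ := Fin 2) (R := O) G0 : O) : K)]
  · -- Ψ is a unit
    have hccΨ : IsUnit (MvPowerSeries.constantCoeff (σ := Fin 2) (R := O) Ψ) :=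
      hu.map (MvPowerSeries.constantCoeff (σ := Fin 2) (R := O))
    have hccΨne : ((MvPowerSeries.constantCoeff (σ := Fin 2) (R := O) Ψ : O) : K) ≠ 0 := by
      obtain ⟨z, hz⟩ := isUnit_iff_exists_inv.mp hccΨ
      intro h0
      have hzval := congrArg (fun x : O => (x : K)) hz
      push_cast at hzval
      rw [h0, zero_mul] at hzval
      exact zero_ne_one hzval
    have hccmul := congrArg (MvPowerSeries.constantCoeff (σ := Fin 2) (R := O)) hfac
    rw [h00, map_mul] at hccmul
    have hccK := congrArg (fun x : O => (x : K)) hccmul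
    push_cast at hccK
    have hccG0zero : ((MvPowerSeries.constantCoeff (σ := Fin 2) (R := O) G0 : O) : K) = 0 := by
      rcases mul_eq_zero.mp hccK.symm with h | h
      · exact h
      · exact absurd h hccΨne
    have hprodzero : (∏ j, (ξs j - 1)) = 0 := by
      rw [← hG00, ← hccG0val, hccG0zero]
    obtain ⟨j0, _, hj0⟩ := Finset.prod_eq_zero_iff.mp hprodzero
    have hξsj0 : ξs j0 = 1 := by
      have := sub_eq_zero.mp hj0
      exact this
    -- deduce ξ = 1
    obtain ⟨σ, hσO, hσξ⟩ := hconj j0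
    have hξ1 : ξ = 1 := by
      have h1 : σ ξ = σ 1 := by rw [hσξ, map_one, hξsj0]
      exact σ.injective h1
    have hall : ∀ j, ξs j = 1 := by
      intro j
      obtain ⟨σj, _, hσj⟩ := hconj j
      rw [← hσj, hξ1, map_one]
    have hg1 : g = 1 := by
      by_contra hgne
      have hg2 : 2 ≤ g := by omega
      have h01 : (⟨0, by omega⟩ : Fin g) = ⟨1, by omega⟩ :=
        hξsinj (by rw [hall, hall])
      have := congrArg Fin.val h01
      simp at this
    subst hg1
    refine ⟨hξ1, rfl, ?_⟩
    obtain ⟨u, huval⟩ := hu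
    refine ⟨-u, ?_⟩
    have hGone : G = -(bin - yPlusOne) := by
      rw [hGdef, Fin.prod_univ_one, hhjdef]
      simp only [hall 0, inv_one, map_one, one_mul]
      rw [hyPeq]
      ring
    have hmapneg : MvPowerSeries.map O.subtype ((-u : (MvPowerSeries (Fin 2) O)ˣ) :
        MvPowerSeries (Fin 2) O) = -ψ0 := by
      rw [Units.val_neg, map_neg, huval, hΨmap]
    rw [hmapneg, hGψ, hGone]
    ring
end
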